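/- Let N ≥ 1, 0 < ℓ < N, N < θ < N + 1, and set K(x) = |x|^{ℓ−N}. Then there exists a constant C > 0 such that for every x ∈ ℝ^N with x ≠ 0, ∫_{ℝ^N} |K(x−y) − K(x)| |y|^{−θ} dy ≤ C |x|^{ℓ−θ}. -/

import Mathlib

open MeasureTheory Real Metric Set
open scoped ENNReal

section KernelAux

lemma measurable_comp_rpow {α : Type*} [MeasurableSpace α] {g : α → ℝ}
    (hg : Measurable g) (hg0 : ∀ t, 0 ≤ g t) {c : ℝ} (hc : c ≠ 0) :
    Measurable fun t => g t ^ c := by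
  have h : (fun t => g t ^ c) = fun t =>
      if g t = 0 then 0 else Real.exp (Real.log (g t) * c) := by
    funext t
    by_cases h : g t = 0
    · simp [h, Real.zero_rpow hc]
    · rw [if_neg h, Real.rpow_def_of_pos ((hg0 t).lt_of_ne (Ne.symm h))]
  rw [h]
  exact Measurable.ite (hg (measurableSet_singleton 0)) measurable_const
    (((Real.measurable_log.comp hg).mul_const c).exp)

lemma measurable_kernel_integrand {N : ℕ} (x : EuclideanSpace ℝ (Fin N)) {a θ : ℝ}
    (ha : a ≠ 0) (hθ : θ ≠ 0) :
    Measurable fun y : EuclideanSpace ℝ (Fin N) =>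
      ENNReal.ofReal (|‖x - y‖ ^ a - ‖x‖ ^ a| * ‖y‖ ^ (-θ)) := by
  apply Measurable.ennreal_ofReal
  apply Measurable.mul
  · exact ((measurable_comp_rpow ((measurable_const.sub measurable_id).norm)
      (fun _ => norm_nonneg _) ha).sub measurable_const).abs
  · exact measurable_comp_rpow measurable_norm (fun _ => norm_nonneg _) (neg_ne_zero.2 hθ)

lemma rpow_pow_comm {x : ℝ} (hx : 0 ≤ x) (k : ℕ) (p : ℝ) : (x ^ k) ^ p = (x ^ p) ^ k := by
  rw [← Real.rpow_natCast x k, ← Real.rpow_mul hx, mul_comm, Real.rpow_mul hx,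
    Real.rpow_natCast]

lemma exists_annulus_lt {R t : ℝ} (h0 : 0 < t) (hR : t < R) :
    ∃ k : ℕ, R / 2 ^ (k + 1) ≤ t ∧ t < R / 2 ^ k := by
  have hR0 : (0:ℝ) < R := h0.trans hR
  have hex : ∃ k : ℕ, R / 2 ^ k ≤ t := by
    obtain ⟨n, hn⟩ := pow_unbounded_of_one_lt (R / t) (one_lt_two (α := ℝ))
    refine ⟨n, ?_⟩
    rw [div_le_iff₀ (by positivity)]
    have := (div_lt_iff₀ h0).1 hn
    nlinarith
  classical
  have hk : R / 2 ^ Nat.find hex ≤ t := Nat.find_spec hex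
  have hk0 : Nat.find hex ≠ 0 := by
    intro h
    rw [h] at hk
    simp at hk
    linarith
  refine ⟨Nat.find hex - 1, ?_, ?_⟩
  · rwa [Nat.sub_add_cancel (Nat.one_le_iff_ne_zero.2 hk0)]
  · exact not_le.1 (Nat.find_min hex (Nat.pred_lt hk0))

lemma exists_annulus_ge {R t : ℝ} (hR0 : 0 < R) (h : R ≤ t) :
    ∃ k : ℕ, R * 2 ^ k ≤ t ∧ t < R * 2 ^ (k + 1) := by
  have hex : ∃ k : ℕ, t < R * 2 ^ k := by
    obtain ⟨n, hn⟩ := pow_unbounded_of_one_lt (t / R) (one_lt_two (α := ℝ))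
    refine ⟨n, ?_⟩
    have := (div_lt_iff₀ hR0).1 hn
    nlinarith
  classical
  have hk : t < R * 2 ^ Nat.find hex := Nat.find_spec hex
  have hk0 : Nat.find hex ≠ 0 := by
    intro hh
    rw [hh] at hk
    simp at hk
    linarith
  refine ⟨Nat.find hex - 1, ?_, ?_⟩
  · exact not_lt.1 (Nat.find_min hex (Nat.pred_lt hk0))
  · rwa [Nat.sub_add_cancel (Nat.one_le_iff_ne_zero.2 hk0)]

lemma nontrivial_euclidean {N : ℕ} (hN : 1 ≤ N) : Nontrivial (EuclideanSpace ℝ (Fin N)) := by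
  refine ⟨0, EuclideanSpace.single ⟨0, hN⟩ 1, fun h => ?_⟩
  have := congrArg (fun v => v ⟨0, hN⟩) h
  simp at this

lemma lintegral_rpow_lt_top_of_cover {N : ℕ} (hN : 1 ≤ N) {p : ℝ} (hp : p < 0)
    {s : Set (EuclideanSpace ℝ (Fin N))} {ρ : ℕ → ℝ} (hρ : ∀ k, 0 < ρ k)
    (hcover : s ⊆ ⋃ k, (ball (0 : EuclideanSpace ℝ (Fin N)) (2 * ρ k) \ ball 0 (ρ k)))
    {c r : ℝ} (hc : 0 ≤ c) (hr0 : 0 ≤ r) (hr1 : r < 1)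
    (hterm : ∀ k, ρ k ^ p * (2 * ρ k) ^ N ≤ c * r ^ k) :
    ∫⁻ z in s, ENNReal.ofReal (‖z‖ ^ p) < ⊤ := by
  haveI := nontrivial_euclidean hN
  set V := volume (ball (0 : EuclideanSpace ℝ (Fin N)) 1) with hVdef
  have hV : V < ⊤ := measure_ball_lt_top
  have hann : ∀ k, ∫⁻ z in ball (0 : EuclideanSpace ℝ (Fin N)) (2 * ρ k) \ ball 0 (ρ k),
      ENNReal.ofReal (‖z‖ ^ p) ≤ ENNReal.ofReal (c * r ^ k) * V := by
    intro k
    have hmeas : MeasurableSet (ball (0 : EuclideanSpace ℝ (Fin N)) (2 * ρ k) \ ball 0 (ρ k)) :=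
      measurableSet_ball.diff measurableSet_ball
    calc ∫⁻ z in ball (0 : EuclideanSpace ℝ (Fin N)) (2 * ρ k) \ ball 0 (ρ k),
          ENNReal.ofReal (‖z‖ ^ p)
        ≤ ∫⁻ _ in ball (0 : EuclideanSpace ℝ (Fin N)) (2 * ρ k) \ ball 0 (ρ k),
          ENNReal.ofReal (ρ k ^ p) := by
          refine setLIntegral_mono' hmeas fun z hz => ?_
          refine ENNReal.ofReal_le_ofReal ?_
          have h1 : ρ k ≤ ‖z‖ := by
            have := hz.2
            simpa [mem_ball_zero_iff, not_lt] using this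
          exact Real.rpow_le_rpow_of_nonpos (hρ k) h1 hp.le
      _ = ENNReal.ofReal (ρ k ^ p) *
            volume (ball (0 : EuclideanSpace ℝ (Fin N)) (2 * ρ k) \ ball 0 (ρ k)) :=
          setLIntegral_const _ _
      _ ≤ ENNReal.ofReal (ρ k ^ p) * (ENNReal.ofReal ((2 * ρ k) ^ N) * V) := by
          refine mul_le_mul_right ?_ _
          have hball := Measure.addHaar_ball (volume : Measure (EuclideanSpace ℝ (Fin N)))
            (0 : EuclideanSpace ℝ (Fin N)) (by linarith [hρ k] : (0:ℝ) ≤ 2 * ρ k)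
          calc volume (ball (0 : EuclideanSpace ℝ (Fin N)) (2 * ρ k) \ ball 0 (ρ k))
              ≤ volume (ball (0 : EuclideanSpace ℝ (Fin N)) (2 * ρ k)) :=
                measure_mono diff_subset
            _ = ENNReal.ofReal ((2 * ρ k) ^ N) * V := by
                rw [hball]; simp [finrank_euclideanSpace, hVdef]
      _ = ENNReal.ofReal (ρ k ^ p * (2 * ρ k) ^ N) * V := by
          rw [ENNReal.ofReal_mul (Real.rpow_nonneg (hρ k).le p), mul_assoc]
      _ ≤ ENNReal.ofReal (c * r ^ k) * V :=
          mul_le_mul_left (ENNReal.ofReal_le_ofReal (hterm k)) _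
  calc ∫⁻ z in s, ENNReal.ofReal (‖z‖ ^ p)
      ≤ ∫⁻ z in ⋃ k, (ball (0 : EuclideanSpace ℝ (Fin N)) (2 * ρ k) \ ball 0 (ρ k)),
        ENNReal.ofReal (‖z‖ ^ p) := lintegral_mono_set hcover
    _ ≤ ∑' k, ∫⁻ z in ball (0 : EuclideanSpace ℝ (Fin N)) (2 * ρ k) \ ball 0 (ρ k),
        ENNReal.ofReal (‖z‖ ^ p) := lintegral_iUnion_le _ _
    _ ≤ ∑' k, ENNReal.ofReal (c * r ^ k) * V := ENNReal.tsum_le_tsum hann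
    _ = ∑' k : ℕ, (ENNReal.ofReal c * ENNReal.ofReal r ^ k) * V := by
        congr 1 with k
        rw [ENNReal.ofReal_mul hc, ENNReal.ofReal_pow hr0]
    _ = (ENNReal.ofReal c * ∑' k : ℕ, ENNReal.ofReal r ^ k) * V := by
        rw [ENNReal.tsum_mul_right, ENNReal.tsum_mul_left]
    _ < ⊤ := by
        rw [ENNReal.tsum_geometric]
        have h1 : ENNReal.ofReal r < 1 := ENNReal.ofReal_lt_one.2 hr1
        have h2 : (1 - ENNReal.ofReal r)⁻¹ < ⊤ := ENNReal.inv_lt_top.2 (tsub_pos_of_lt h1)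
        exact ENNReal.mul_lt_top (ENNReal.mul_lt_top ENNReal.ofReal_lt_top h2) hV

lemma lintegral_rpow_ball_lt_top {N : ℕ} (hN : 1 ≤ N) {p R : ℝ} (hpN : -(N:ℝ) < p) (hp : p < 0)
    (hR : 0 < R) :
    ∫⁻ z in ball (0 : EuclideanSpace ℝ (Fin N)) R, ENNReal.ofReal (‖z‖ ^ p) < ⊤ := by
  set ρ : ℕ → ℝ := fun k => R / 2 ^ (k + 1) with hρdef
  have hρ : ∀ k, 0 < ρ k := fun k => by positivity
  have hρ2 : ∀ k, 2 * ρ k = R / 2 ^ k := by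
    intro k
    rw [hρdef]
    field_simp [pow_succ]
    ring
  have hcov : ball (0 : EuclideanSpace ℝ (Fin N)) R ⊆
      ({0} : Set (EuclideanSpace ℝ (Fin N))) ∪
        ⋃ k, (ball (0 : EuclideanSpace ℝ (Fin N)) (2 * ρ k) \ ball 0 (ρ k)) := by
    intro z hz
    rcases eq_or_ne z 0 with h | h
    · exact Or.inl h
    · refine Or.inr (mem_iUnion.2 ?_)
      rw [mem_ball_zero_iff] at hz
      obtain ⟨k, h1, h2⟩ := exists_annulus_lt (norm_pos_iff.2 h) hz
      refine ⟨k, mem_ball_zero_iff.2 (by rw [hρ2 k]; exact h2), fun hc => ?_⟩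
      rw [mem_ball_zero_iff] at hc
      exact absurd h1 (not_le.2 hc)
  have hterm : ∀ k, ρ k ^ p * (2 * ρ k) ^ N ≤
      ((R / 2) ^ p * R ^ N) * ((1/2 : ℝ) ^ p * (1/2 : ℝ) ^ N) ^ k := by
    intro k
    have e1 : ρ k = (R / 2) * (1/2 : ℝ) ^ k := by
      simp only [hρdef]
      rw [one_div, inv_pow, pow_succ, mul_comm ((2:ℝ)^k) 2, ← div_div, div_eq_mul_inv (R/2)]
    have e2 : 2 * ρ k = R * (1/2 : ℝ) ^ k := by
      rw [hρ2 k, one_div, inv_pow, div_eq_mul_inv]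
    have h1 : ρ k ^ p = (R / 2) ^ p * ((1/2 : ℝ) ^ p) ^ k := by
      rw [e1, Real.mul_rpow (by positivity) (by positivity), rpow_pow_comm (by norm_num) k p]
    have h2 : (2 * ρ k) ^ N = R ^ N * (((1/2 : ℝ)) ^ N) ^ k := by
      rw [e2, mul_pow, pow_right_comm]
    rw [h1, h2, mul_pow ((1/2:ℝ) ^ p) ((1/2:ℝ) ^ N) k]
    ring_nf
    exact le_refl _
  have hr1 : (1/2 : ℝ) ^ p * (1/2 : ℝ) ^ N < 1 := by
    have : (1/2 : ℝ) ^ p * (1/2 : ℝ) ^ N = (1/2 : ℝ) ^ (p + N) := by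
      rw [← Real.rpow_natCast (1/2 : ℝ) N, ← Real.rpow_add (by norm_num)]
    rw [this]
    exact Real.rpow_lt_one (by norm_num) (by norm_num) (by linarith)
  have h0 : ∫⁻ z in ({0} : Set (EuclideanSpace ℝ (Fin N))), ENNReal.ofReal (‖z‖ ^ p) = 0 := by
    rw [lintegral_singleton]
    simp [Real.zero_rpow hp.ne]
  calc ∫⁻ z in ball (0 : EuclideanSpace ℝ (Fin N)) R, ENNReal.ofReal (‖z‖ ^ p)
      ≤ ∫⁻ z in ({0} : Set (EuclideanSpace ℝ (Fin N))) ∪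
          ⋃ k, (ball (0 : EuclideanSpace ℝ (Fin N)) (2 * ρ k) \ ball 0 (ρ k)),
          ENNReal.ofReal (‖z‖ ^ p) := lintegral_mono_set hcov
    _ ≤ (∫⁻ z in ({0} : Set (EuclideanSpace ℝ (Fin N))), ENNReal.ofReal (‖z‖ ^ p)) +
          ∫⁻ z in ⋃ k, (ball (0 : EuclideanSpace ℝ (Fin N)) (2 * ρ k) \ ball 0 (ρ k)),
          ENNReal.ofReal (‖z‖ ^ p) := lintegral_union_le _ _ _
    _ < ⊤ := by
        rw [h0, zero_add]
        exact lintegral_rpow_lt_top_of_cover hN hp hρ subset_rfl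
          (by positivity) (by positivity) hr1 hterm

lemma lintegral_rpow_compl_lt_top {N : ℕ} (hN : 1 ≤ N) {p R : ℝ} (hpN : p < -(N:ℝ)) (hR : 0 < R) :
    ∫⁻ z in (ball (0 : EuclideanSpace ℝ (Fin N)) R)ᶜ, ENNReal.ofReal (‖z‖ ^ p) < ⊤ := by
  set ρ : ℕ → ℝ := fun k => R * 2 ^ k with hρdef
  have hρ : ∀ k, 0 < ρ k := fun k => by positivity
  have hp : p < 0 := by
    have : (0:ℝ) ≤ N := Nat.cast_nonneg N
    linarith
  have hcov : (ball (0 : EuclideanSpace ℝ (Fin N)) R)ᶜ ⊆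
      ⋃ k, (ball (0 : EuclideanSpace ℝ (Fin N)) (2 * ρ k) \ ball 0 (ρ k)) := by
    intro z hz
    rw [mem_compl_iff, mem_ball_zero_iff, not_lt] at hz
    obtain ⟨k, h1, h2⟩ := exists_annulus_ge hR hz
    refine mem_iUnion.2 ⟨k, mem_ball_zero_iff.2 ?_, fun hc => ?_⟩
    · rw [hρdef]
      calc ‖z‖ < R * 2 ^ (k+1) := h2
        _ = 2 * (R * 2 ^ k) := by ring
    · rw [mem_ball_zero_iff] at hc
      exact absurd h1 (not_le.2 hc)
  have hterm : ∀ k, ρ k ^ p * (2 * ρ k) ^ N ≤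
      (R ^ p * (2 * R) ^ N) * ((2 : ℝ) ^ p * (2 : ℝ) ^ N) ^ k := by
    intro k
    have e2 : 2 * ρ k = (2 * R) * (2 : ℝ) ^ k := by simp only [hρdef]; ring
    have h1 : ρ k ^ p = R ^ p * ((2 : ℝ) ^ p) ^ k := by
      simp only [hρdef]
      rw [Real.mul_rpow hR.le (by positivity), rpow_pow_comm (by norm_num) k p]
    have h2 : (2 * ρ k) ^ N = (2 * R) ^ N * (((2 : ℝ)) ^ N) ^ k := by
      rw [e2, mul_pow, pow_right_comm]
    rw [h1, h2, mul_pow ((2:ℝ) ^ p) ((2:ℝ) ^ N) k]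
    ring_nf
    exact le_refl _
  have hr1 : (2 : ℝ) ^ p * (2 : ℝ) ^ N < 1 := by
    have : (2 : ℝ) ^ p * (2 : ℝ) ^ N = (2 : ℝ) ^ (p + N) := by
      rw [← Real.rpow_natCast (2 : ℝ) N, ← Real.rpow_add (by norm_num)]
    rw [this]
    exact Real.rpow_lt_one_of_one_lt_of_neg one_lt_two (by linarith)
  exact lintegral_rpow_lt_top_of_cover hN hp hρ hcov (by positivity) (by positivity) hr1 hterm

lemma lintegral_comp_smul_eq {N : ℕ} {g : EuclideanSpace ℝ (Fin N) → ℝ≥0∞}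
    (hg : Measurable g) {c : ℝ} (hc : 0 < c) :
    ∫⁻ y, g y = ENNReal.ofReal (c ^ N) * ∫⁻ z, g (c • z) := by
  have hmap : Measure.map (c • ·) (volume : Measure (EuclideanSpace ℝ (Fin N))) =
      ENNReal.ofReal |((c : ℝ) ^ Module.finrank ℝ (EuclideanSpace ℝ (Fin N)))⁻¹| • volume :=
    Measure.map_addHaar_smul volume hc.ne'
  have h1 : ∫⁻ z, g (c • z) = ∫⁻ y, g y ∂(Measure.map (c • ·) volume) :=
    (lintegral_map hg (measurable_const_smul c)).symm
  rw [h1, hmap, lintegral_smul_measure, finrank_euclideanSpace, Fintype.card_fin,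
    abs_of_nonneg (by positivity), ENNReal.ofReal_inv_of_pos (by positivity), smul_eq_mul, ← mul_assoc,
    ENNReal.mul_inv_cancel (by simp [ENNReal.ofReal_pos]; positivity) ENNReal.ofReal_ne_top,
    one_mul]

lemma abs_rpow_sub_rpow_le {a : ℝ} (ha : a ≤ 0) {s t : ℝ} (hs : (1:ℝ)/2 ≤ s) (ht : (1:ℝ)/2 ≤ t) :
    |s ^ a - t ^ a| ≤ (|a| * (1/2 : ℝ) ^ (a - 1)) * |s - t| := by
  have hconv : Convex ℝ (Ici (1/2 : ℝ)) := convex_Ici _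
  have hder : ∀ x ∈ Ici (1/2 : ℝ),
      HasDerivWithinAt (fun u : ℝ => u ^ a) (a * x ^ (a - 1)) (Ici (1/2 : ℝ)) x := by
    intro x hx
    have hx0 : x ≠ 0 := by
      have := mem_Ici.1 hx; intro h; rw [h] at this; norm_num at this
    exact (Real.hasDerivAt_rpow_const (Or.inl hx0)).hasDerivWithinAt
  have hbound : ∀ x ∈ Ici (1/2 : ℝ), ‖a * x ^ (a - 1)‖ ≤ |a| * (1/2 : ℝ) ^ (a - 1) := by
    intro x hx
    have hx2 : (1/2 : ℝ) ≤ x := mem_Ici.1 hx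
    rw [Real.norm_eq_abs, abs_mul, abs_of_nonneg (Real.rpow_nonneg (by linarith) _)]
    refine mul_le_mul_of_nonneg_left ?_ (abs_nonneg a)
    exact Real.rpow_le_rpow_of_nonpos (by norm_num) hx2 (by linarith)
  have := hconv.norm_image_sub_le_of_norm_hasDerivWithin_le hder hbound (mem_Ici.2 ht) (mem_Ici.2 hs)
  simpa [Real.norm_eq_abs] using this

lemma unit_vector_bound {N : ℕ} (hN : 1 ≤ N) {a θ : ℝ} (haN : -(N:ℝ) < a) (ha : a < 0)
    (hθN : (N:ℝ) < θ) (hθ2 : θ < N + 1) :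
    ∃ B : ℝ≥0∞, B < ⊤ ∧ ∀ u : EuclideanSpace ℝ (Fin N), ‖u‖ = 1 →
      (∫⁻ y, ENNReal.ofReal (|‖u - y‖ ^ a - ‖u‖ ^ a| * ‖y‖ ^ (-θ))) ≤ B := by
  have hN1 : (1:ℝ) ≤ (N:ℝ) := by exact_mod_cast hN
  have hθ0 : 0 < θ := by linarith
  set L : ℝ := |a| * (1/2 : ℝ) ^ (a - 1) with hLdef
  have hL0 : 0 ≤ L := by positivity
  set J1 := ∫⁻ y in ball (0 : EuclideanSpace ℝ (Fin N)) (1/2), ENNReal.ofReal (‖y‖ ^ (1 - θ))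
    with hJ1def
  set J2 := ∫⁻ w in ball (0 : EuclideanSpace ℝ (Fin N)) 1, ENNReal.ofReal (‖w‖ ^ a) with hJ2def
  set J3 := ∫⁻ y in (ball (0 : EuclideanSpace ℝ (Fin N)) (1/2))ᶜ, ENNReal.ofReal (‖y‖ ^ (-θ))
    with hJ3def
  have hJ1 : J1 < ⊤ :=
    lintegral_rpow_ball_lt_top hN (by linarith) (by linarith) (by norm_num)
  have hJ2 : J2 < ⊤ := lintegral_rpow_ball_lt_top hN haN ha one_pos
  have hJ3 : J3 < ⊤ := lintegral_rpow_compl_lt_top hN (by linarith) (by norm_num)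
  refine ⟨ENNReal.ofReal L * J1 +
    ((ENNReal.ofReal ((1/2 : ℝ) ^ (-θ)) * J2 + J3) + J3), ?_, ?_⟩
  · refine ENNReal.add_lt_top.2 ⟨ENNReal.mul_lt_top ENNReal.ofReal_lt_top hJ1, ?_⟩
    refine ENNReal.add_lt_top.2 ⟨?_, hJ3⟩
    exact ENNReal.add_lt_top.2 ⟨ENNReal.mul_lt_top ENNReal.ofReal_lt_top hJ2, hJ3⟩
  intro u hu
  have hmeasg1 : Measurable fun z : EuclideanSpace ℝ (Fin N) =>
      ENNReal.ofReal (‖u - z‖ ^ a * ‖z‖ ^ (-θ)) := by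
    apply Measurable.ennreal_ofReal
    exact (measurable_comp_rpow ((measurable_const.sub measurable_id).norm)
      (fun _ => norm_nonneg _) ha.ne).mul
      (measurable_comp_rpow measurable_norm (fun _ => norm_nonneg _) (neg_ne_zero.2 hθ0.ne'))
  rw [← lintegral_add_compl (μ := volume)
    (fun y => ENNReal.ofReal (|‖u - y‖ ^ a - ‖u‖ ^ a| * ‖y‖ ^ (-θ)))
    (measurableSet_ball (x := (0 : EuclideanSpace ℝ (Fin N))) (ε := 1/2))]
  refine add_le_add ?_ ?_
  · -- near the origin
    calc ∫⁻ y in ball (0 : EuclideanSpace ℝ (Fin N)) (1/2),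
          ENNReal.ofReal (|‖u - y‖ ^ a - ‖u‖ ^ a| * ‖y‖ ^ (-θ))
        ≤ ∫⁻ y in ball (0 : EuclideanSpace ℝ (Fin N)) (1/2),
          ENNReal.ofReal L * ENNReal.ofReal (‖y‖ ^ (1 - θ)) := by
          refine setLIntegral_mono' measurableSet_ball fun z hz => ?_
          rw [mem_ball_zero_iff] at hz
          have h1 : (1:ℝ)/2 ≤ ‖u - z‖ := by
            have := norm_sub_norm_le u z
            rw [hu] at this
            linarith
          have h2 : (1:ℝ)/2 ≤ ‖u‖ := by rw [hu]; norm_num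
          have h3 : |‖u - z‖ ^ a - ‖u‖ ^ a| ≤ L * ‖z‖ := by
            refine (abs_rpow_sub_rpow_le ha.le h1 h2).trans ?_
            refine mul_le_mul_of_nonneg_left ?_ hL0
            simpa using abs_norm_sub_norm_le (u - z) u
          have h4 : ‖z‖ * ‖z‖ ^ (-θ) = ‖z‖ ^ (1 - θ) := by
            rcases eq_or_ne ‖z‖ 0 with h | h
            · rw [h, Real.zero_rpow (by linarith : -θ ≠ 0),
                Real.zero_rpow (by linarith : 1 - θ ≠ 0), mul_zero]
            · have hpos : 0 < ‖z‖ := (norm_nonneg z).lt_of_ne (Ne.symm h)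
              rw [sub_eq_add_neg, Real.rpow_add hpos, Real.rpow_one]
          calc ENNReal.ofReal (|‖u - z‖ ^ a - ‖u‖ ^ a| * ‖z‖ ^ (-θ))
              ≤ ENNReal.ofReal ((L * ‖z‖) * ‖z‖ ^ (-θ)) :=
                ENNReal.ofReal_le_ofReal
                  (mul_le_mul_of_nonneg_right h3 (Real.rpow_nonneg (norm_nonneg z) _))
            _ = ENNReal.ofReal L * ENNReal.ofReal (‖z‖ ^ (1 - θ)) := by
                rw [mul_assoc, h4, ENNReal.ofReal_mul hL0]
      _ = ENNReal.ofReal L * J1 := by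
          rw [hJ1def]
          exact lintegral_const_mul' _ _ ENNReal.ofReal_ne_top
  · -- away from the origin
    calc ∫⁻ y in (ball (0 : EuclideanSpace ℝ (Fin N)) (1/2))ᶜ,
          ENNReal.ofReal (|‖u - y‖ ^ a - ‖u‖ ^ a| * ‖y‖ ^ (-θ))
        ≤ ∫⁻ y in (ball (0 : EuclideanSpace ℝ (Fin N)) (1/2))ᶜ,
          (ENNReal.ofReal (‖u - y‖ ^ a * ‖y‖ ^ (-θ)) + ENNReal.ofReal (‖y‖ ^ (-θ))) := by
          refine setLIntegral_mono' measurableSet_ball.compl fun z _ => ?_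
          have hA : 0 ≤ ‖u - z‖ ^ a := Real.rpow_nonneg (norm_nonneg _) a
          have habs : |‖u - z‖ ^ a - ‖u‖ ^ a| ≤ ‖u - z‖ ^ a + 1 := by
            rw [hu, Real.one_rpow]
            exact abs_le.2 ⟨by linarith, by linarith⟩
          calc ENNReal.ofReal (|‖u - z‖ ^ a - ‖u‖ ^ a| * ‖z‖ ^ (-θ))
              ≤ ENNReal.ofReal ((‖u - z‖ ^ a + 1) * ‖z‖ ^ (-θ)) :=
                ENNReal.ofReal_le_ofReal
                  (mul_le_mul_of_nonneg_right habs (Real.rpow_nonneg (norm_nonneg z) _))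
            _ = ENNReal.ofReal (‖u - z‖ ^ a * ‖z‖ ^ (-θ) + ‖z‖ ^ (-θ)) := by ring_nf
            _ ≤ ENNReal.ofReal (‖u - z‖ ^ a * ‖z‖ ^ (-θ)) + ENNReal.ofReal (‖z‖ ^ (-θ)) :=
                ENNReal.ofReal_add_le
      _ = (∫⁻ y in (ball (0 : EuclideanSpace ℝ (Fin N)) (1/2))ᶜ,
            ENNReal.ofReal (‖u - y‖ ^ a * ‖y‖ ^ (-θ))) + J3 := by
          rw [hJ3def]
          exact lintegral_add_left (hmeasg1) _
      _ ≤ (ENNReal.ofReal ((1/2 : ℝ) ^ (-θ)) * J2 + J3) + J3 := by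
          refine add_le_add ?_ le_rfl
          have hsplit : (ball (0 : EuclideanSpace ℝ (Fin N)) (1/2))ᶜ ⊆
              ((ball (0 : EuclideanSpace ℝ (Fin N)) (1/2))ᶜ ∩ ball u 1) ∪
                ((ball (0 : EuclideanSpace ℝ (Fin N)) (1/2))ᶜ \ ball u 1) := by
            intro z hz
            by_cases h : z ∈ ball u 1
            · exact Or.inl ⟨hz, h⟩
            · exact Or.inr ⟨hz, h⟩
          have htrans : ∫⁻ y in ball u 1, ENNReal.ofReal (‖u - y‖ ^ a)
              = J2 := by
            have hinner : Measurable fun y : EuclideanSpace ℝ (Fin N) =>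
                ENNReal.ofReal (‖u - y‖ ^ a) :=
              Measurable.ennreal_ofReal (measurable_comp_rpow
                ((measurable_const.sub measurable_id).norm) (fun _ => norm_nonneg _) ha.ne)
            have hgm : Measurable fun z : EuclideanSpace ℝ (Fin N) =>
                (ball u 1).indicator (fun y => ENNReal.ofReal (‖u - y‖ ^ a)) z :=
              hinner.indicator measurableSet_ball
            have hmp := (measurePreserving_add_left
              (volume : Measure (EuclideanSpace ℝ (Fin N))) u).lintegral_comp hgm
            rw [hJ2def]
            calc ∫⁻ y in ball u 1, ENNReal.ofReal (‖u - y‖ ^ a)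
                = ∫⁻ y, (ball u 1).indicator (fun y => ENNReal.ofReal (‖u - y‖ ^ a)) y :=
                  (lintegral_indicator measurableSet_ball _).symm
              _ = ∫⁻ w, (ball u 1).indicator
                    (fun y => ENNReal.ofReal (‖u - y‖ ^ a)) (u + w) := hmp.symm
              _ = ∫⁻ w, (ball (0 : EuclideanSpace ℝ (Fin N)) 1).indicator
                    (fun w => ENNReal.ofReal (‖w‖ ^ a)) w := by
                  refine lintegral_congr fun w => ?_
                  have hmem : (u + w ∈ ball u 1) ↔ (w ∈ ball (0 : EuclideanSpace ℝ (Fin N)) 1) := by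
                    rw [mem_ball, mem_ball_zero_iff, dist_eq_norm, add_sub_cancel_left]
                  by_cases h : w ∈ ball (0 : EuclideanSpace ℝ (Fin N)) 1
                  · rw [indicator_of_mem h, indicator_of_mem (hmem.2 h)]
                    rw [show u - (u + w) = -w by abel, norm_neg]
                  · rw [indicator_of_notMem h, indicator_of_notMem (fun hc => h (hmem.1 hc))]
              _ = ∫⁻ w in ball (0 : EuclideanSpace ℝ (Fin N)) 1, ENNReal.ofReal (‖w‖ ^ a) :=
                  lintegral_indicator measurableSet_ball _
          calc ∫⁻ y in (ball (0 : EuclideanSpace ℝ (Fin N)) (1/2))ᶜ,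
                ENNReal.ofReal (‖u - y‖ ^ a * ‖y‖ ^ (-θ))
              ≤ (∫⁻ y in (ball (0 : EuclideanSpace ℝ (Fin N)) (1/2))ᶜ ∩ ball u 1,
                  ENNReal.ofReal (‖u - y‖ ^ a * ‖y‖ ^ (-θ))) +
                ∫⁻ y in (ball (0 : EuclideanSpace ℝ (Fin N)) (1/2))ᶜ \ ball u 1,
                  ENNReal.ofReal (‖u - y‖ ^ a * ‖y‖ ^ (-θ)) :=
                (lintegral_mono_set hsplit).trans (lintegral_union_le _ _ _)
            _ ≤ ENNReal.ofReal ((1/2 : ℝ) ^ (-θ)) * J2 + J3 := by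
                refine add_le_add ?_ ?_
                · calc ∫⁻ y in (ball (0 : EuclideanSpace ℝ (Fin N)) (1/2))ᶜ ∩ ball u 1,
                        ENNReal.ofReal (‖u - y‖ ^ a * ‖y‖ ^ (-θ))
                      ≤ ∫⁻ y in (ball (0 : EuclideanSpace ℝ (Fin N)) (1/2))ᶜ ∩ ball u 1,
                        ENNReal.ofReal ((1/2 : ℝ) ^ (-θ)) * ENNReal.ofReal (‖u - y‖ ^ a) := by
                        refine setLIntegral_mono' (measurableSet_ball.compl.inter
                          measurableSet_ball) fun z hz => ?_
                        have hz1 : (1:ℝ)/2 ≤ ‖z‖ := by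
                          have := hz.1
                          rw [mem_compl_iff, mem_ball_zero_iff, not_lt] at this
                          exact this
                        have hle : ‖z‖ ^ (-θ) ≤ (1/2 : ℝ) ^ (-θ) :=
                          Real.rpow_le_rpow_of_nonpos (by norm_num) hz1 (by linarith)
                        calc ENNReal.ofReal (‖u - z‖ ^ a * ‖z‖ ^ (-θ))
                            ≤ ENNReal.ofReal (‖u - z‖ ^ a * (1/2 : ℝ) ^ (-θ)) :=
                              ENNReal.ofReal_le_ofReal (mul_le_mul_of_nonneg_left hle
                                (Real.rpow_nonneg (norm_nonneg _) _))
                          _ = ENNReal.ofReal ((1/2 : ℝ) ^ (-θ)) * ENNReal.ofReal (‖u - z‖ ^ a) := by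
                              rw [mul_comm, ENNReal.ofReal_mul
                                (Real.rpow_nonneg (by norm_num) _)]
                    _ ≤ ∫⁻ y in ball u 1,
                        ENNReal.ofReal ((1/2 : ℝ) ^ (-θ)) * ENNReal.ofReal (‖u - y‖ ^ a) :=
                        lintegral_mono_set inter_subset_right
                    _ = ENNReal.ofReal ((1/2 : ℝ) ^ (-θ)) *
                        ∫⁻ y in ball u 1, ENNReal.ofReal (‖u - y‖ ^ a) :=
                        lintegral_const_mul' _ _ ENNReal.ofReal_ne_top
                    _ = ENNReal.ofReal ((1/2 : ℝ) ^ (-θ)) * J2 := by rw [htrans]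
                · calc ∫⁻ y in (ball (0 : EuclideanSpace ℝ (Fin N)) (1/2))ᶜ \ ball u 1,
                        ENNReal.ofReal (‖u - y‖ ^ a * ‖y‖ ^ (-θ))
                      ≤ ∫⁻ y in (ball (0 : EuclideanSpace ℝ (Fin N)) (1/2))ᶜ \ ball u 1,
                        ENNReal.ofReal (‖y‖ ^ (-θ)) := by
                        refine setLIntegral_mono' (measurableSet_ball.compl.diff
                          measurableSet_ball) fun z hz => ?_
                        have hz2 : (1:ℝ) ≤ ‖u - z‖ := by
                          have := hz.2
                          rw [mem_ball, not_lt, dist_eq_norm] at this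
                          calc (1:ℝ) ≤ ‖z - u‖ := this
                            _ = ‖u - z‖ := by rw [norm_sub_rev]
                        have hle1 : ‖u - z‖ ^ a ≤ 1 :=
                          Real.rpow_le_one_of_one_le_of_nonpos hz2 ha.le
                        refine ENNReal.ofReal_le_ofReal ?_
                        calc ‖u - z‖ ^ a * ‖z‖ ^ (-θ) ≤ 1 * ‖z‖ ^ (-θ) :=
                              mul_le_mul_of_nonneg_right hle1
                                (Real.rpow_nonneg (norm_nonneg _) _)
                          _ = ‖z‖ ^ (-θ) := one_mul _
                    _ ≤ J3 := by
                        rw [hJ3def]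
                        exact lintegral_mono_set diff_subset

end KernelAux

/-- The estimate `∫ |K(x-y) - K(x)| |y|^{-θ} dy ≲ |x|^{ℓ-θ}` for `K(x) = |x|^{ℓ-N}`
and `N < θ < N+1` (Section 4 of the paper). -/
theorem kernel_difference_integral_estimate (N : ℕ) (hN : 1 ≤ N) (ℓ θ : ℝ)
    (hℓ0 : 0 < ℓ) (hℓN : ℓ < N) (hθ1 : (N : ℝ) < θ) (hθ2 : θ < N + 1) :
    ∃ C : ℝ, 0 < C ∧ ∀ x : EuclideanSpace ℝ (Fin N), x ≠ 0 →
      (∫⁻ y, ENNReal.ofReal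
          (|‖x - y‖ ^ (ℓ - (N : ℝ)) - ‖x‖ ^ (ℓ - (N : ℝ))| * ‖y‖ ^ (-θ)))
        ≤ ENNReal.ofReal (C * ‖x‖ ^ (ℓ - θ)) := by
  have hN1 : (1:ℝ) ≤ (N:ℝ) := by exact_mod_cast hN
  have hθ0 : 0 < θ := by linarith
  set a := ℓ - (N:ℝ) with ha_def
  have haN : -(N:ℝ) < a := by rw [ha_def]; linarith
  have ha : a < 0 := by rw [ha_def]; linarith
  obtain ⟨B, hB, hBu⟩ := unit_vector_bound hN haN ha hθ1 hθ2
  refine ⟨B.toReal + 1, by positivity, fun x hx => ?_⟩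
  set c := ‖x‖ with hc_def
  have hc : 0 < c := norm_pos_iff.2 hx
  set u := c⁻¹ • x with hu_def
  have hu : ‖u‖ = 1 := norm_smul_inv_norm hx
  have hxcu : x = c • u := by rw [hu_def, smul_inv_smul₀ hc.ne']
  have hmeasf : Measurable fun y : EuclideanSpace ℝ (Fin N) =>
      ENNReal.ofReal (|‖x - y‖ ^ a - ‖x‖ ^ a| * ‖y‖ ^ (-θ)) :=
    measurable_kernel_integrand x ha.ne hθ0.ne'
  have hpow : c ^ a * c ^ (-θ) = c ^ (a - θ) := by
    rw [← Real.rpow_add hc, sub_eq_add_neg]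
  have hpt : ∀ z, ENNReal.ofReal (|‖x - c • z‖ ^ a - ‖x‖ ^ a| * ‖c • z‖ ^ (-θ))
      = ENNReal.ofReal (c ^ (a - θ)) *
        ENNReal.ofReal (|‖u - z‖ ^ a - ‖u‖ ^ a| * ‖z‖ ^ (-θ)) := by
    intro z
    have h1 : ‖x - c • z‖ = c * ‖u - z‖ := by
      rw [hxcu, ← smul_sub, norm_smul, Real.norm_eq_abs, abs_of_pos hc]
    have h2 : ‖c • z‖ = c * ‖z‖ := by rw [norm_smul, Real.norm_eq_abs, abs_of_pos hc]
    have h3 : ‖x‖ = c * ‖u‖ := by rw [hu, mul_one]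
    rw [h1, h2, h3, Real.mul_rpow hc.le (norm_nonneg _), Real.mul_rpow hc.le (norm_nonneg _),
      Real.mul_rpow hc.le (norm_nonneg _), ← mul_sub, abs_mul,
      abs_of_nonneg (Real.rpow_nonneg hc.le a),
      ← ENNReal.ofReal_mul (by positivity : (0:ℝ) ≤ c ^ (a - θ))]
    congr 1
    rw [← hpow]
    ring
  calc ∫⁻ y, ENNReal.ofReal (|‖x - y‖ ^ a - ‖x‖ ^ a| * ‖y‖ ^ (-θ))
      = ENNReal.ofReal (c ^ N) *
        ∫⁻ z, ENNReal.ofReal (|‖x - c • z‖ ^ a - ‖x‖ ^ a| * ‖c • z‖ ^ (-θ)) :=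
        lintegral_comp_smul_eq hmeasf hc
    _ = ENNReal.ofReal (c ^ N) * (ENNReal.ofReal (c ^ (a - θ)) *
        ∫⁻ z, ENNReal.ofReal (|‖u - z‖ ^ a - ‖u‖ ^ a| * ‖z‖ ^ (-θ))) := by
        rw [lintegral_congr hpt, lintegral_const_mul' _ _ ENNReal.ofReal_ne_top]
    _ ≤ ENNReal.ofReal (c ^ N) * (ENNReal.ofReal (c ^ (a - θ)) * B) :=
        mul_le_mul_right (mul_le_mul_right (hBu u hu) _) _
    _ ≤ ENNReal.ofReal (c ^ N) * (ENNReal.ofReal (c ^ (a - θ)) *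
        ENNReal.ofReal (B.toReal + 1)) := by
        refine mul_le_mul_right (mul_le_mul_right ?_ _) _
        rw [← ENNReal.ofReal_toReal hB.ne]
        exact ENNReal.ofReal_le_ofReal (by simp [ENNReal.toReal_ofReal ENNReal.toReal_nonneg])
    _ = ENNReal.ofReal ((B.toReal + 1) * ‖x‖ ^ (ℓ - θ)) := by
        rw [← mul_assoc, ← ENNReal.ofReal_mul (by positivity),
          ← ENNReal.ofReal_mul (by positivity)]
        congr 1
        have : c ^ N * c ^ (a - θ) = c ^ (ℓ - θ) := by
          rw [← Real.rpow_natCast c N, ← Real.rpow_add hc]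
          congr 1
          rw [ha_def]
          ring
        rw [this, mul_comm, hc_def]
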